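/- Let μ be an instance of REP over Σ with words u_start, u_end and rules w_i → w'_i for 1 ≤ i ≤ n, and let h be an overlapping solution of α_μ = β_μ with associated words v_1,…,v_n, suffixes y_1,…,y_n, and v_{n+1} := y_n w'_n. For 1 ≤ i ≤ n+1 let ṽ_i denote the unique conjugate of v_i that begins with the letter # (it exists since each v_i contains exactly one occurrence of #). Then for every 1 ≤ i ≤ n there exist words s_i, t_i ∈ Σ^* such that ṽ_i = # s_i w_i t_i and ṽ_{i+1} = # s_i w'_i t_i. -/
import Mathlib


/-!
Framework for REP (Rewriting with Programmed Rules) and the associated word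
equations α_μ = β_μ.  Constants: `Option A` models Σ ∪ {#}, where `none` is the
fresh letter `#` and `some a` embeds a ∈ Σ.  Variables are modelled by `ℕ`
(the variable x_i is `i`).
-/

namespace REP

/-- `u_end` is obtained from `u_start` by applying each of the `n` rules
`w i → w' i` (for `i = 1, …, n`) once, in order, each application replacing one
occurrence of `w i` by `w' i`. -/
def SatisfiesREP {A : Type} (n : ℕ) (ustart uend : List A) (w w' : ℕ → List A) : Prop :=
  ∃ u : ℕ → List A, u 0 = ustart ∧ u n = uend ∧
    ∀ i, 1 ≤ i → i ≤ n → ∃ s t : List A,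
      u (i - 1) = s ++ w i ++ t ∧ u i = s ++ w' i ++ t

/-- Apply a substitution (identity on constants) to a pattern. -/
def applySub {A : Type} (h : ℕ → List (Option A)) : List (Option A ⊕ ℕ) → List (Option A)
  | [] => []
  | Sum.inl a :: rest => a :: applySub h rest
  | Sum.inr x :: rest => h x ++ applySub h rest

/-- Embed a constant word over Σ into patterns over Σ ∪ {#}. -/
def lift {A : Type} (u : List A) : List (Option A ⊕ ℕ) := u.map (fun a => Sum.inl (some a))

/-- Embed a constant word over Σ into words over Σ ∪ {#}. -/
def liftW {A : Type} (u : List A) : List (Option A) := u.map some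

/-- The fresh letter `#` as a pattern symbol. -/
def hash {A : Type} : Option A ⊕ ℕ := Sum.inl none

/-- `x_1 w_1 x_2 w_2 ⋯ x_n w_n`. -/
def blocks {A : Type} (w : ℕ → List A) : ℕ → List (Option A ⊕ ℕ)
  | 0 => []
  | n + 1 => blocks w n ++ (Sum.inr (n + 1) :: lift (w (n + 1)))

/-- α_μ = `x_1 w_1 x_2 w_2 ⋯ x_n w_n x_{n+1} # u_end`. -/
def alphaMu {A : Type} (n : ℕ) (uend : List A) (w : ℕ → List A) : List (Option A ⊕ ℕ) :=
  blocks w n ++ [Sum.inr (n + 1), hash] ++ lift uend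

/-- β_μ = `# u_start x_1 w'_1 x_2 w'_2 ⋯ x_n w'_n x_{n+1}`. -/
def betaMu {A : Type} (n : ℕ) (ustart : List A) (w' : ℕ → List A) : List (Option A ⊕ ℕ) :=
  hash :: lift ustart ++ blocks w' n ++ [Sum.inr (n + 1)]

/-- `x_1 w_1 ⋯ x_i w_i`. -/
def alphaPrefix {A : Type} (w : ℕ → List A) (i : ℕ) : List (Option A ⊕ ℕ) := blocks w i

/-- `# u_start x_1 w'_1 ⋯ w'_{i-1} x_i`. -/
def betaPrefix {A : Type} (ustart : List A) (w' : ℕ → List A) (i : ℕ) :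
    List (Option A ⊕ ℕ) :=
  hash :: lift ustart ++ blocks w' (i - 1) ++ [Sum.inr i]

/-- `h` is a solution of the equation α = β. -/
def IsSolution {A : Type} (h : ℕ → List (Option A)) (α β : List (Option A ⊕ ℕ)) : Prop :=
  applySub h α = applySub h β

/-- `h` is an overlapping solution of α_μ = β_μ : it is a solution and, for every
`1 ≤ i ≤ n`, there is `z_i` such that `w_i z_i` is a suffix of `h(x_i)` and
`h(# u_start x_1 w'_1 ⋯ w'_{i-1} x_i) = h(x_1 w_1 ⋯ x_i w_i) z_i`. -/
def OverlappingSolution {A : Type} (n : ℕ) (ustart uend : List A) (w w' : ℕ → List A)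
    (h : ℕ → List (Option A)) : Prop :=
  IsSolution h (alphaMu n uend w) (betaMu n ustart w') ∧
  ∀ i, 1 ≤ i → i ≤ n → ∃ z : List (Option A),
    (liftW (w i) ++ z) <:+ h i ∧
    applySub h (betaPrefix ustart w' i) = applySub h (alphaPrefix w i) ++ z

/-- `n`-fold concatenation `u^n` of the word `u`. -/
def npow {A : Type} (u : List A) : ℕ → List A
  | 0 => []
  | n + 1 => u ++ npow u n

/-- `y_i`, the suffix of `h(x_i)` of length `|v_i| - |w_i|`. -/
def ySuf {A : Type} (h : ℕ → List (Option A)) (v : ℕ → List (Option A)) (w : ℕ → List A)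
    (i : ℕ) : List (Option A) :=
  (h i).drop ((h i).length - ((v i).length - (w i).length))

/-- Two words are conjugate if `u = st` and `v = ts` for some words `s`, `t`. -/
def Conj {B : Type} (u v : List B) : Prop := ∃ s t : List B, u = s ++ t ∧ v = t ++ s

/-- The words `v_1, …, v_n` associated with an overlapping solution `h`
(as guaranteed by the characterisation of overlapping solutions):
`v_i` is a prefix of `h(x_i)`, `|w_i| ≤ |v_i|`, `h(x_i) w_i` is a prefix of `v_i^ω`
(i.e. of `v_i^m` for all sufficiently large `m`), `v_1 = # u_start`,
`v_i = y_{i-1} w'_{i-1}` for `2 ≤ i ≤ n`, and `y_n w'_n h(x_{n+1}) = h(x_{n+1}) # u_end`. -/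
def AssocWords {A : Type} (n : ℕ) (ustart uend : List A) (w w' : ℕ → List A)
    (h : ℕ → List (Option A)) (v : ℕ → List (Option A)) : Prop :=
  (∀ i, 1 ≤ i → i ≤ n →
    v i <+: h i ∧ (w i).length ≤ (v i).length ∧
    ∃ N : ℕ, ∀ m : ℕ, N ≤ m → (h i ++ liftW (w i)) <+: npow (v i) m) ∧
  v 1 = none :: liftW ustart ∧
  (∀ i, 2 ≤ i → i ≤ n → v i = ySuf h v w (i - 1) ++ liftW (w' (i - 1))) ∧
  ySuf h v w n ++ liftW (w' n) ++ h (n + 1) = h (n + 1) ++ none :: liftW uend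

end REP

section Aux

open REP

lemma npow_nil {B : Type} (m : ℕ) : npow ([] : List B) m = [] := by
  induction m with
  | zero => rfl
  | succ m ih => simpa [npow] using ih

lemma npow_length {B : Type} (v : List B) (m : ℕ) :
    (npow v m).length = m * v.length := by
  induction m with
  | zero => simp [npow]
  | succ m ih => simp [npow, ih, Nat.succ_mul]; ring

lemma lemA {B : Type} (v : List B) (hv : v ≠ []) :
    ∀ m q (x : List B), x <+: npow v m → x.length = q + v.length →
      x.drop q = v.drop (q % v.length) ++ v.take (q % v.length) := by
  have hvpos : 0 < v.length := List.length_pos_iff.mpr hv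
  intro m
  induction m with
  | zero =>
    intro q x hx hlen
    have : x = [] := List.prefix_nil.mp (by simpa [npow] using hx)
    subst this
    simp at hlen
    omega
  | succ m ih =>
    intro q x hx hlen
    have hxlen : x.length ≤ (m + 1) * v.length := by
      simpa [npow_length] using hx.length_le
    have hring : (m + 1) * v.length = m * v.length + v.length := by ring
    have hxeq : x = List.take x.length (npow v (m + 1)) :=
      List.prefix_iff_eq_take.mp hx
    have hxsplit : x = v ++ List.take (x.length - v.length) (npow v m) := by
      conv_lhs => rw [hxeq]
      show List.take x.length (v ++ npow v m) = _
      rw [List.take_append, List.take_of_length_le (by omega)]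
    set c := List.take (x.length - v.length) (npow v m) with hc
    have hcpre : c <+: npow v m := List.take_prefix _ _
    have hclen : c.length = q := by
      rw [hc, List.length_take, npow_length]
      omega
    by_cases hq : q < v.length
    · have hcq : c = v.take q := by
        rcases Nat.eq_zero_or_pos m with hm | hm
        · have hc0 : c = [] := List.prefix_nil.mp (by simpa [hm, npow] using hcpre)
          have hq0 : q = 0 := by rw [hc0] at hclen; simpa using hclen.symm
          simp [hc0, hq0]
        · obtain ⟨m', rfl⟩ : ∃ m', m = m' + 1 := ⟨m - 1, by omega⟩
          have hcpre' : c <+: v ++ npow v m' := hcpre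
          rw [List.prefix_iff_eq_take.mp hcpre', hclen,
            List.take_append]
          have h0 : q - v.length = 0 := by omega
          simp [h0]
      have hdrop : x.drop q = v.drop q ++ c := by
        rw [hxsplit, List.drop_append]
        have h0 : q - v.length = 0 := by omega
        simp [h0]
      rw [hdrop, hcq, Nat.mod_eq_of_lt hq]
    · have hclen' : c.length = (q - v.length) + v.length := by omega
      have hrec := ih (q - v.length) c hcpre hclen'
      have hdrop : x.drop q = c.drop (q - v.length) := by
        have hnilv : List.drop q v = ([] : List B) :=
          List.drop_eq_nil_of_le (by omega)
        rw [hxsplit, List.drop_append, hnilv]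
        simp
      rw [hdrop, hrec, ← Nat.mod_eq_sub_mod (by omega)]

lemma key {B : Type} (v h W : List B) (hW : W.length ≤ v.length) (hpre : v <+: h)
    (hm : ∃ m, (h ++ W) <+: npow v m) :
    ∃ s t : List B, v = s ++ t ∧
      h.drop (h.length - (v.length - W.length)) ++ W = t ++ s := by
  obtain ⟨m, hx⟩ := hm
  by_cases hv : v = []
  · subst hv
    have hnil : h ++ W = [] := List.prefix_nil.mp (by simpa [npow_nil] using hx)
    obtain ⟨h1, h2⟩ := List.append_eq_nil_iff.mp hnil
    exact ⟨[], [], by simp, by simp [h1, h2]⟩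
  · have hvle := hpre.length_le
    set q := h.length - (v.length - W.length) with hq
    have hlen : (h ++ W).length = q + v.length := by
      simp only [List.length_append]
      omega
    have hmain := lemA v hv m q (h ++ W) hx hlen
    refine ⟨v.take (q % v.length), v.drop (q % v.length),
      (List.take_append_drop _ _).symm, ?_⟩
    rw [← hmain, List.drop_append]
    have : q - h.length = 0 := by omega
    simp [this]

lemma conj_symm {B : Type} {u v : List B} (h : Conj u v) : Conj v u := by
  obtain ⟨s, t, rfl, rfl⟩ := h
  exact ⟨t, s, rfl, rfl⟩

lemma conj_trans {B : Type} {u v w : List B} (h1 : Conj u v) (h2 : Conj v w) :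
    Conj u w := by
  obtain ⟨s, t, rfl, rfl⟩ := h1
  obtain ⟨p, q, hpq, rfl⟩ := h2
  rcases List.append_eq_append_iff.mp hpq with ⟨a, rfl, rfl⟩ | ⟨a, rfl, rfl⟩
  · exact ⟨a, q ++ t, by simp, by simp⟩
  · exact ⟨s ++ p, a, by simp, by simp⟩

lemma conj_countP {B : Type} {u v : List B} (h : Conj u v)
    (p : B → Bool) : u.countP p = v.countP p := by
  obtain ⟨s, t, rfl, rfl⟩ := h
  simp [List.countP_append]
  omega

lemma countP_none_liftW {A : Type} (u : List A) :
    (liftW u).countP Option.isNone = 0 := by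
  rw [List.countP_eq_zero]
  simp [liftW]

lemma liftW_filterMap {A : Type} (l : List (Option A)) (hl : (none : Option A) ∉ l) :
    liftW (l.filterMap id) = l := by
  induction l with
  | nil => rfl
  | cons a l ih =>
    cases a with
    | none => simp at hl
    | some b =>
      simp only [List.mem_cons] at hl
      push_neg at hl
      simp [liftW, List.filterMap_cons] at ih ⊢
      exact ih hl.2

end Aux

/-!
STATEMENT 6: for an overlapping solution h of α_μ = β_μ with associated words
v_1, …, v_n (and v_{n+1} := y_n w'_n), for every 1 ≤ i ≤ n there are words
s_i, t_i ∈ Σ^* such that the word # s_i w_i t_i is a conjugate of v_i (hence it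
is ṽ_i, the unique conjugate of v_i beginning with #) and # s_i w'_i t_i is a
conjugate of v_{i+1} (hence it is ṽ_{i+1}).
-/

open REP in
theorem stmt6 (A : Type) (n : ℕ) (hn : 1 ≤ n)
    (ustart uend : List A) (w w' : ℕ → List A)
    (h : ℕ → List (Option A)) (v : ℕ → List (Option A))
    (hover : OverlappingSolution n ustart uend w w' h)
    (hv : AssocWords n ustart uend w w' h v) :
    ∀ i, 1 ≤ i → i ≤ n → ∃ s t : List A,
      Conj (none :: (liftW s ++ liftW (w i) ++ liftW t)) (v i) ∧
      Conj (none :: (liftW s ++ liftW (w' i) ++ liftW t))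
        (if i + 1 = n + 1 then ySuf h v w n ++ liftW (w' n) else v (i + 1)) := by
  obtain ⟨hA, hv1, hvmid, hvlast⟩ := hv
  have C : ∀ i, 1 ≤ i → i ≤ n → Conj (v i) (ySuf h v w i ++ liftW (w i)) := by
    intro i h1 h2
    obtain ⟨hpre, hwl, N, hN⟩ := hA i h1 h2
    have hWlen : (liftW (w i)).length = (w i).length := by simp [liftW]
    obtain ⟨s, t, hst, hts⟩ := key (v i) (h i) (liftW (w i))
      (by omega) hpre ⟨N, hN N le_rfl⟩
    refine ⟨s, t, hst, ?_⟩
    rw [← hts, ySuf, hWlen]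
  have cnt : ∀ i, 1 ≤ i → i ≤ n → (v i).countP Option.isNone = 1 := by
    intro i h1
    induction i, h1 using Nat.le_induction with
    | base =>
      intro _
      rw [hv1]
      simp [List.countP_cons, countP_none_liftW]
    | succ i hi ih =>
      intro hsn
      have hin : i ≤ n := by omega
      have hcc := conj_countP (C i hi hin) Option.isNone
      rw [ih hin, List.countP_append, countP_none_liftW] at hcc
      rw [hvmid (i + 1) (by omega) hsn]
      simp only [Nat.add_sub_cancel, List.countP_append, countP_none_liftW]
      omega
  intro i h1 h2
  have hconj := C i h1 h2
  have hcnt1 : (ySuf h v w i).countP Option.isNone = 1 := by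
    have hcc := conj_countP hconj Option.isNone
    rw [cnt i h1 h2, List.countP_append, countP_none_liftW] at hcc
    omega
  have hmem : (none : Option A) ∈ ySuf h v w i := by
    have hpos : 0 < (ySuf h v w i).countP Option.isNone := by omega
    obtain ⟨a, ha, hpa⟩ := List.countP_pos_iff.mp hpos
    rwa [Option.isNone_iff_eq_none.mp hpa] at ha
  obtain ⟨p, q, hy⟩ := List.append_of_mem hmem
  have hpq0 : p.countP Option.isNone = 0 ∧ q.countP Option.isNone = 0 := by
    rw [hy] at hcnt1
    simp [List.countP_append, List.countP_cons] at hcnt1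
    omega
  have hpn : (none : Option A) ∉ p := fun hmm => by
    have := List.countP_eq_zero.mp hpq0.1 none hmm; simp at this
  have hqn : (none : Option A) ∉ q := fun hmm => by
    have := List.countP_eq_zero.mp hpq0.2 none hmm; simp at this
  refine ⟨q.filterMap id, p.filterMap id, ?_, ?_⟩
  · rw [liftW_filterMap q hqn, liftW_filterMap p hpn]
    refine conj_trans ?_ (conj_symm hconj)
    rw [hy]
    exact ⟨none :: (q ++ liftW (w i)), p, by simp, by simp⟩
  · rw [liftW_filterMap q hqn, liftW_filterMap p hpn]
    have htarget : (if i + 1 = n + 1 then ySuf h v w n ++ liftW (w' n) else v (i + 1))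
        = ySuf h v w i ++ liftW (w' i) := by
      by_cases hin : i = n
      · subst hin; simp
      · rw [if_neg (by omega), hvmid (i + 1) (by omega) (by omega)]
        simp
    rw [htarget, hy]
    exact ⟨none :: (q ++ liftW (w' i)), p, by simp, by simp⟩
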